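/- One-vs-Rest risk identity for a single class: let F : [0,1] → ℝ be convex and differentiable with the binary proper loss L(p,y) = −F(p) − F'(p)(y − p), and let g_i : 𝒳 → [0,1] be a measurable binary classifier for class i. Writing q_i := E[1{Y=i} | g_i(X)] for the conditional probability of class i given g_i(X) and π_i := μ(Y = i), the One-vs-Rest risk R_i(g_i) := E[L(g_i(X), 1{Y=i})] satisfies R_i(g_i) = E[D_F(q_i, g_i(X))] − E[D_F(q_i, π_i)] − F(π_i). -/

import Mathlib

open MeasureTheory ProbabilityTheory

/-- One-dimensional Bregman divergence generated by `F`. -/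
noncomputable def bregR (F : ℝ → ℝ) (x y : ℝ) : ℝ :=
  F x - F y - deriv F y * (x - y)

/-- Auxiliary: bounded a.e.-measurable functions are integrable on a finite measure space. -/
lemma integrable_of_bdd {Ω : Type*} [MeasurableSpace Ω] {μ : MeasureTheory.Measure Ω}
    [IsFiniteMeasure μ]
    {f : Ω → ℝ} (hf : AEStronglyMeasurable f μ) {C : ℝ} (hb : ∀ᵐ ω ∂μ, |f ω| ≤ C) :
    Integrable f μ :=
  Integrable.mono' (integrable_const C) hf (by simpa [Real.norm_eq_abs] using hb)

/-- Key abstract lemma: the one-vs-rest risk identity for bounded `g` and a `[0,1]`-valued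
target `ind` with mean `π`. -/
lemma ovr_key {Ω : Type*} {m mΩ : MeasurableSpace Ω} (hm : m ≤ mΩ)
    (μ : MeasureTheory.Measure Ω) [IsProbabilityMeasure μ]
    (g ind : Ω → ℝ) (hg : Measurable g) (hgm : Measurable[m] g)
    (hg01 : ∀ ω, g ω ∈ Set.Icc (0 : ℝ) 1)
    (hind : Measurable ind) (hind01 : ∀ ω, ind ω ∈ Set.Icc (0 : ℝ) 1)
    (π : ℝ)
    (hπ_eq : ∫ ω, ind ω ∂μ = π)
    (F : ℝ → ℝ)
    (hFc : ContinuousOn F (Set.Icc (0 : ℝ) 1))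
    (hF'c : ContinuousOn (deriv F) (Set.Icc (0 : ℝ) 1)) :
    ∫ ω, (-(F (g ω)) - deriv F (g ω) * (ind ω - g ω)) ∂μ
      = (∫ ω, bregR F ((μ[ind | m]) ω) (g ω) ∂μ)
        - (∫ ω, bregR F ((μ[ind | m]) ω) π ∂μ)
        - F π := by
  haveI : SigmaFinite (μ.trim hm) := inferInstance
  -- clamping to [0,1]
  set clamp : ℝ → ℝ := fun x => max 0 (min 1 x) with hclamp_def
  have hclamp_cont : Continuous clamp := continuous_const.max (continuous_const.min continuous_id)
  have hclamp_mem : ∀ x, clamp x ∈ Set.Icc (0 : ℝ) 1 :=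
    fun x => ⟨le_max_left _ _, max_le zero_le_one (min_le_left _ _)⟩
  have hclamp_eq : ∀ x ∈ Set.Icc (0 : ℝ) 1, clamp x = x := by
    rintro x ⟨h0, h1⟩
    simp [hclamp_def, min_eq_right h1, max_eq_right h0]
  set Ft : ℝ → ℝ := fun x => F (clamp x) with hFt_def
  have hFt_cont : Continuous Ft := hFc.comp_continuous hclamp_cont hclamp_mem
  obtain ⟨C, hC⟩ := isCompact_Icc.exists_bound_of_continuousOn hFc
  obtain ⟨C', hC'⟩ := isCompact_Icc.exists_bound_of_continuousOn hF'c
  have hFt_bdd : ∀ x, |Ft x| ≤ C := fun x => by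
    simpa [Real.norm_eq_abs] using hC (clamp x) (hclamp_mem x)
  -- the conditional expectation q
  set q : Ω → ℝ := μ[ind | m] with hq_def
  have hq_int : Integrable q μ := integrable_condExp
  have hq_sm : StronglyMeasurable q := stronglyMeasurable_condExp.mono hm
  have hind_int : Integrable ind μ := integrable_of_bdd hind.aestronglyMeasurable (C := 1)
    (Filter.Eventually.of_forall fun ω => abs_le.2 ⟨by linarith [(hind01 ω).1], (hind01 ω).2⟩)
  have hq01 : ∀ᵐ ω ∂μ, q ω ∈ Set.Icc (0 : ℝ) 1 := by
    have h0 : 0 ≤ᵐ[μ] q := condExp_nonneg (Filter.Eventually.of_forall fun ω => (hind01 ω).1)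
    have h1 : q ≤ᵐ[μ] μ[(fun _ => (1 : ℝ)) | m] :=
      condExp_mono hind_int (integrable_const 1)
        (Filter.Eventually.of_forall fun ω => (hind01 ω).2)
    have hc : μ[(fun _ => (1 : ℝ)) | m] =ᵐ[μ] fun _ => (1 : ℝ) :=
      Filter.EventuallyEq.of_eq (condExp_const (μ := μ) hm (1 : ℝ))
    filter_upwards [h0, h1, hc] with ω h0ω h1ω hcω
    exact ⟨h0ω, by rw [hcω] at h1ω; exact h1ω⟩
  have hq_mean : ∫ ω, q ω ∂μ = π := by
    have := integral_condExp hm (f := ind) (μ := μ)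
    rw [hq_def]
    rw [this, hπ_eq]
  -- the derivative factor
  set f : Ω → ℝ := fun ω => deriv F (g ω) with hf_def
  have hf_meas : Measurable f := (measurable_deriv F).comp hg
  have hf_bdd : ∀ ω, |f ω| ≤ C' := fun ω => by
    simpa [Real.norm_eq_abs] using hC' (g ω) (hg01 ω)
  have hfm : StronglyMeasurable[m] f :=
    (Measurable.stronglyMeasurable ((measurable_deriv F).comp hgm))
  -- pull-out property
  have hmul : μ[f * ind | m] =ᵐ[μ] f * q :=
    condExp_stronglyMeasurable_mul_of_bound hm hfm hind_int C'
      (Filter.Eventually.of_forall fun ω => by simpa [Real.norm_eq_abs] using hf_bdd ω)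
  have hkey : ∫ ω, f ω * ind ω ∂μ = ∫ ω, f ω * q ω ∂μ := by
    calc ∫ ω, f ω * ind ω ∂μ = ∫ ω, (μ[f * ind | m]) ω ∂μ :=
          (integral_condExp hm (f := f * ind)).symm
      _ = ∫ ω, (f * q) ω ∂μ := integral_congr_ae hmul
      _ = ∫ ω, f ω * q ω ∂μ := rfl
  -- integrability of all the pieces
  have intFtg : Integrable (fun ω => Ft (g ω)) μ :=
    integrable_of_bdd (hFt_cont.measurable.comp hg).aestronglyMeasurable
      (Filter.Eventually.of_forall fun ω => hFt_bdd (g ω))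
  have intFtq : Integrable (fun ω => Ft (q ω)) μ :=
    integrable_of_bdd (hFt_cont.measurable.comp hq_sm.measurable).aestronglyMeasurable
      (Filter.Eventually.of_forall fun ω => hFt_bdd (q ω))
  have intfq : Integrable (fun ω => f ω * q ω) μ := by
    refine integrable_of_bdd (hf_meas.mul hq_sm.measurable).aestronglyMeasurable (C := |C'|) ?_
    filter_upwards [hq01] with ω hω
    calc |f ω * q ω| = |f ω| * |q ω| := abs_mul _ _
      _ ≤ |C'| * 1 := by
          refine mul_le_mul ((hf_bdd ω).trans (le_abs_self C')) ?_ (abs_nonneg _) (abs_nonneg _)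
          rw [abs_le]; exact ⟨by linarith [hω.1], hω.2⟩
      _ = |C'| := mul_one _
  have intfg : Integrable (fun ω => f ω * g ω) μ := by
    refine integrable_of_bdd (hf_meas.mul hg).aestronglyMeasurable (C := |C'|)
      (Filter.Eventually.of_forall fun ω => ?_)
    calc |f ω * g ω| = |f ω| * |g ω| := abs_mul _ _
      _ ≤ |C'| * 1 := by
          refine mul_le_mul ((hf_bdd ω).trans (le_abs_self C')) ?_ (abs_nonneg _) (abs_nonneg _)
          rw [abs_le]; exact ⟨by linarith [(hg01 ω).1], (hg01 ω).2⟩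
      _ = |C'| := mul_one _
  have intfind : Integrable (fun ω => f ω * ind ω) μ := by
    refine integrable_of_bdd (hf_meas.mul hind).aestronglyMeasurable (C := |C'|)
      (Filter.Eventually.of_forall fun ω => ?_)
    calc |f ω * ind ω| = |f ω| * |ind ω| := abs_mul _ _
      _ ≤ |C'| * 1 := by
          refine mul_le_mul ((hf_bdd ω).trans (le_abs_self C')) ?_ (abs_nonneg _) (abs_nonneg _)
          rw [abs_le]; exact ⟨by linarith [(hind01 ω).1], (hind01 ω).2⟩
      _ = |C'| := mul_one _
  -- LHS computation
  have hLHS : ∫ ω, (-(F (g ω)) - deriv F (g ω) * (ind ω - g ω)) ∂μ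
      = -(∫ ω, Ft (g ω) ∂μ) - (∫ ω, f ω * ind ω ∂μ) + ∫ ω, f ω * g ω ∂μ := by
    have he : ∀ ω, (-(F (g ω)) - deriv F (g ω) * (ind ω - g ω))
        = (-(Ft (g ω)) - f ω * ind ω) + f ω * g ω := by
      intro ω
      have h2 : Ft (g ω) = F (g ω) := congrArg F (hclamp_eq _ (hg01 ω))
      rw [h2, hf_def]; ring
    have i1 : Integrable (fun ω => -(Ft (g ω)) - f ω * ind ω) μ := intFtg.neg.sub intfind
    have i2 : Integrable (fun ω => -(Ft (g ω))) μ := intFtg.neg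
    rw [integral_congr_ae (Filter.Eventually.of_forall he),
      integral_add i1 intfg, integral_sub i2 intfind, integral_neg]
  -- RHS term 1
  have hR1 : ∫ ω, bregR F (q ω) (g ω) ∂μ
      = (∫ ω, Ft (q ω) ∂μ) - (∫ ω, Ft (g ω) ∂μ) - (∫ ω, f ω * q ω ∂μ)
        + ∫ ω, f ω * g ω ∂μ := by
    have he : (fun ω => bregR F (q ω) (g ω))
        =ᵐ[μ] fun ω => ((Ft (q ω) - Ft (g ω)) - f ω * q ω) + f ω * g ω := by
      filter_upwards [hq01] with ω hω
      have h1 : Ft (q ω) = F (q ω) := congrArg F (hclamp_eq _ hω)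
      have h2 : Ft (g ω) = F (g ω) := congrArg F (hclamp_eq _ (hg01 ω))
      simp only [bregR]
      rw [h1, h2, hf_def]; ring
    have i1 : Integrable (fun ω => (Ft (q ω) - Ft (g ω)) - f ω * q ω) μ :=
      (intFtq.sub intFtg).sub intfq
    have i2 : Integrable (fun ω => Ft (q ω) - Ft (g ω)) μ := intFtq.sub intFtg
    rw [integral_congr_ae he, integral_add i1 intfg, integral_sub i2 intfq,
      integral_sub intFtq intFtg]
  -- RHS term 2
  have hR2 : ∫ ω, bregR F (q ω) π ∂μ = (∫ ω, Ft (q ω) ∂μ) - F π := by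
    have he : (fun ω => bregR F (q ω) π)
        =ᵐ[μ] fun ω => (Ft (q ω) - deriv F π * q ω) + (deriv F π * π - F π) := by
      filter_upwards [hq01] with ω hω
      have h1 : Ft (q ω) = F (q ω) := congrArg F (hclamp_eq _ hω)
      simp only [bregR]
      rw [h1]; ring
    have i1 : Integrable (fun ω => Ft (q ω) - deriv F π * q ω) μ :=
      intFtq.sub (hq_int.const_mul _)
    have i3 : Integrable (fun ω => deriv F π * q ω) μ := hq_int.const_mul _
    rw [integral_congr_ae he, integral_add i1 (integrable_const _),
      integral_sub intFtq i3, integral_const_mul, hq_mean, integral_const]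
    simp [measure_univ]
  rw [hLHS, hR1, hR2, hkey]
  ring

/-- One-vs-Rest risk identity for a single class:
`R_i(g_i) = E[D_F(q_i, g_i(X))] − E[D_F(q_i, π_i)] − F(π_i)`. -/
theorem one_vs_rest_risk_identity
    {Ω 𝒳 : Type*} [MeasurableSpace Ω] [MeasurableSpace 𝒳]
    (μ : Measure Ω) [IsProbabilityMeasure μ] {k : ℕ}
    (X : Ω → 𝒳) (Y : Ω → Fin k) (i : Fin k)
    (gi : 𝒳 → ℝ)
    (hX : Measurable X) (hY : Measurable Y) (hgi : Measurable gi)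
    (hgs : ∀ x, gi x ∈ Set.Icc (0 : ℝ) 1)
    (F : ℝ → ℝ)
    (hF : ConvexOn ℝ (Set.Icc (0 : ℝ) 1) F)
    (hFd : ∀ x ∈ Set.Icc (0 : ℝ) 1, DifferentiableAt ℝ F x)
    (hFc : ContinuousOn F (Set.Icc (0 : ℝ) 1))
    (hF'c : ContinuousOn (deriv F) (Set.Icc (0 : ℝ) 1)) :
    ∫ ω, (-(F (gi (X ω)))
        - deriv F (gi (X ω)) * ((if Y ω = i then (1 : ℝ) else 0) - gi (X ω))) ∂μ
      = (∫ ω, bregR F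
            ((μ[(fun ω' => if Y ω' = i then (1 : ℝ) else 0) |
                MeasurableSpace.comap (fun ω' => gi (X ω')) inferInstance]) ω)
            (gi (X ω)) ∂μ)
        - (∫ ω, bregR F
            ((μ[(fun ω' => if Y ω' = i then (1 : ℝ) else 0) |
                MeasurableSpace.comap (fun ω' => gi (X ω')) inferInstance]) ω)
            ((μ {ω' | Y ω' = i}).toReal) ∂μ)
        - F ((μ {ω' | Y ω' = i}).toReal) := by
  classical
  have hs : MeasurableSet {ω' | Y ω' = i} := hY (measurableSet_singleton i)
  have hπ_eq : ∫ ω, (if Y ω = i then (1 : ℝ) else 0) ∂μ = (μ {ω' | Y ω' = i}).toReal := by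
    have h : (fun ω => if Y ω = i then (1 : ℝ) else 0)
        = {ω' | Y ω' = i}.indicator (fun _ => (1 : ℝ)) := by
      ext ω; by_cases h : Y ω = i <;> simp [Set.indicator_apply, h]
    rw [h, integral_indicator_const (1 : ℝ) hs, smul_eq_mul, mul_one]; rfl
  exact ovr_key ((hgi.comp hX).comap_le) μ
    (fun ω => gi (X ω)) (fun ω => if Y ω = i then (1 : ℝ) else 0)
    (hgi.comp hX) (Measurable.of_comap_le le_rfl) (fun ω => hgs (X ω))
    (Measurable.ite hs measurable_const measurable_const)
    (fun ω => by by_cases h : Y ω = i <;> simp [h])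
    ((μ {ω' | Y ω' = i}).toReal) hπ_eq F hFc hF'c
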